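/- With the notation above, if the unweighted subcritical Yamabe constant satisfies ∫_M vLv dvol ≥ 0 for all v ∈ C_c^∞(M), then lim_{α→0+} Q_p^α = Q_p, i.e. the weighted subcritical Yamabe constants converge to the unweighted one as the weight exponent tends to zero. -/
import Mathlib


open MeasureTheory Filter

/-- The `L^p` norm `(∫ |f|^p)^{1/p}` as a real number. -/
noncomputable def LpNormR {M : Type*} [MeasurableSpace M] (μ : Measure M) (p : ℝ)
    (f : M → ℝ) : ℝ :=
  (∫ x, |f x| ^ p ∂μ) ^ (1 / p)

/-- The weighted (subcritical) Yamabe constant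
`Q_p^α = inf { ∫ v L v | v ∈ C_c^∞(M), ‖ρ^α v‖_p = 1 }`. -/
noncomputable def weightedYamabe {M : Type*} [MeasurableSpace M] (μ : Measure M)
    (T : Set (M → ℝ)) (E : (M → ℝ) → ℝ) (ρ : M → ℝ) (p α : ℝ) : ℝ :=
  sInf {q : ℝ | ∃ v ∈ T, LpNormR μ p (fun x => ρ x ^ α * v x) = 1 ∧ q = E v}

/-- Rewriting the weighted integrand. -/
private lemma aux_abs_rpow {M : Type*} (ρ : M → ℝ) (hρ : ∀ x, 0 < ρ x) (α p : ℝ) (v : M → ℝ) :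
    (fun x => |ρ x ^ α * v x| ^ p) = fun x => ρ x ^ (α * p) * |v x| ^ p := by
  funext x
  rw [abs_mul, abs_of_nonneg (Real.rpow_nonneg (hρ x).le α),
    Real.mul_rpow (Real.rpow_nonneg (hρ x).le α) (abs_nonneg _), ← Real.rpow_mul (hρ x).le]

/-- Homogeneity of the `L^p` norm. -/
private lemma aux_lp_smul {M : Type*} [MeasurableSpace M] (μ : Measure M) {p : ℝ} (hp : 0 < p)
    (t : ℝ) (f : M → ℝ) :
    LpNormR μ p (fun x => t * f x) = |t| * LpNormR μ p f := by
  unfold LpNormR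
  have h1 : (fun x => |t * f x| ^ p) = fun x => |t| ^ p * |f x| ^ p := by
    funext x; rw [abs_mul, Real.mul_rpow (abs_nonneg _) (abs_nonneg _)]
  rw [h1, integral_const_mul,
    Real.mul_rpow (Real.rpow_nonneg (abs_nonneg t) p)
      (integral_nonneg fun x => Real.rpow_nonneg (abs_nonneg _) p),
    ← Real.rpow_mul (abs_nonneg t), mul_one_div_cancel hp.ne', Real.rpow_one]

/-- Integrability of the weighted integrand. -/
private lemma aux_int {M : Type*} [MeasurableSpace M] (μ : Measure M) {ρ : M → ℝ}
    (hρm : Measurable ρ) (hρ : ∀ x, 0 < ρ x ∧ ρ x ≤ 1) {p : ℝ} {v : M → ℝ} (hv : Measurable v)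
    (hvint : Integrable (fun x => |v x| ^ p) μ) {c : ℝ} (hc : 0 ≤ c) :
    Integrable (fun x => ρ x ^ c * |v x| ^ p) μ := by
  refine hvint.mono' ?_ ?_
  · exact ((hρm.pow_const _).mul (hv.abs.pow_const _)).aestronglyMeasurable
  · filter_upwards with x
    have h0 : (0:ℝ) ≤ ρ x ^ c := Real.rpow_nonneg (hρ x).1.le c
    have h1 : ρ x ^ c ≤ 1 := Real.rpow_le_one (hρ x).1.le (hρ x).2 hc
    have h2 : (0:ℝ) ≤ |v x| ^ p := Real.rpow_nonneg (abs_nonneg _) p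
    rw [Real.norm_eq_abs, abs_of_nonneg (mul_nonneg h0 h2)]
    exact mul_le_of_le_one_left h2 h1

/-- Comparison of the weighted and unweighted integrals. -/
private lemma aux_le {M : Type*} [MeasurableSpace M] (μ : Measure M) {ρ : M → ℝ}
    (hρm : Measurable ρ) (hρ : ∀ x, 0 < ρ x ∧ ρ x ≤ 1) {p : ℝ} {v : M → ℝ} (hv : Measurable v)
    (hvint : Integrable (fun x => |v x| ^ p) μ) {c : ℝ} (hc : 0 ≤ c) :
    ∫ x, ρ x ^ c * |v x| ^ p ∂μ ≤ ∫ x, |v x| ^ p ∂μ := by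
  refine integral_mono (aux_int μ hρm hρ hv hvint hc) hvint fun x => ?_
  have h1 : ρ x ^ c ≤ 1 := Real.rpow_le_one (hρ x).1.le (hρ x).2 hc
  exact mul_le_of_le_one_left (Real.rpow_nonneg (abs_nonneg _) p) h1

/-- Positivity of the weighted integral. -/
private lemma aux_pos {M : Type*} [MeasurableSpace M] (μ : Measure M) {ρ : M → ℝ}
    (hρm : Measurable ρ) (hρ : ∀ x, 0 < ρ x ∧ ρ x ≤ 1) {p : ℝ} {v : M → ℝ} (hv : Measurable v)
    (hvint : Integrable (fun x => |v x| ^ p) μ) {c : ℝ} (hc : 0 ≤ c)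
    (hpos : 0 < ∫ x, |v x| ^ p ∂μ) :
    0 < ∫ x, ρ x ^ c * |v x| ^ p ∂μ := by
  rw [integral_pos_iff_support_of_nonneg (fun x => Real.rpow_nonneg (abs_nonneg _) p) hvint]
    at hpos
  rw [integral_pos_iff_support_of_nonneg
    (fun x => mul_nonneg (Real.rpow_nonneg (hρ x).1.le c) (Real.rpow_nonneg (abs_nonneg _) p))
    (aux_int μ hρm hρ hv hvint hc)]
  have hsupp : (Function.support fun x => ρ x ^ c * |v x| ^ p)
      = Function.support fun x => |v x| ^ p := by
    ext x
    simp only [Function.mem_support, mul_ne_zero_iff]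
    have : ρ x ^ c ≠ 0 := (Real.rpow_pos_of_pos (hρ x).1 c).ne'
    tauto
  rwa [hsupp]

/-- Convergence of the weighted integral as `α → 0⁺`. -/
private lemma aux_tendsto {M : Type*} [MeasurableSpace M] (μ : Measure M) {ρ : M → ℝ}
    (hρm : Measurable ρ) (hρ : ∀ x, 0 < ρ x ∧ ρ x ≤ 1) {p : ℝ} (hp : 0 < p) {v : M → ℝ}
    (hv : Measurable v) (hvint : Integrable (fun x => |v x| ^ p) μ) :
    Tendsto (fun α : ℝ => ∫ x, ρ x ^ (α * p) * |v x| ^ p ∂μ) (nhdsWithin 0 (Set.Ioi 0))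
      (nhds (∫ x, |v x| ^ p ∂μ)) := by
  refine tendsto_integral_filter_of_dominated_convergence (fun x => |v x| ^ p) ?_ ?_ hvint ?_
  · filter_upwards with α
    exact ((hρm.pow_const _).mul (hv.abs.pow_const _)).aestronglyMeasurable
  · filter_upwards [self_mem_nhdsWithin] with α hα
    have hα' : (0:ℝ) < α := hα
    filter_upwards with x
    have h0 : (0:ℝ) ≤ ρ x ^ (α * p) := Real.rpow_nonneg (hρ x).1.le _
    have h1 : ρ x ^ (α * p) ≤ 1 :=
      Real.rpow_le_one (hρ x).1.le (hρ x).2 (mul_nonneg hα'.le hp.le)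
    have h2 : (0:ℝ) ≤ |v x| ^ p := Real.rpow_nonneg (abs_nonneg _) p
    rw [Real.norm_eq_abs, abs_of_nonneg (mul_nonneg h0 h2)]
    exact mul_le_of_le_one_left h2 h1
  · filter_upwards with x
    have heq : (fun α : ℝ => ρ x ^ (α * p)) =
        fun α : ℝ => Real.exp (Real.log (ρ x) * (α * p)) :=
      funext fun α => Real.rpow_def_of_pos (hρ x).1 _
    have hc : Continuous fun α : ℝ => Real.exp (Real.log (ρ x) * (α * p)) := by continuity
    have hb : Tendsto (fun α : ℝ => ρ x ^ (α * p)) (nhdsWithin 0 (Set.Ioi 0)) (nhds 1) := by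
      rw [heq]
      have h4 := (hc.tendsto 0).mono_left (nhdsWithin_le_nhds (s := Set.Ioi 0))
      simpa using h4
    simpa using hb.mul (tendsto_const_nhds (x := |v x| ^ p))

/-- if `∫ v L v ≥ 0` for all test functions `v`, then
`lim_{α→0+} Q_p^α = Q_p`, i.e. the weighted subcritical Yamabe constants converge to the
unweighted one `Q_p = Q_p^0` as the weight exponent tends to zero. -/
theorem weightedYamabe_tendsto_unweighted {M : Type*} [MeasurableSpace M] (μ : Measure M)
    (T : Set (M → ℝ)) (E : (M → ℝ) → ℝ) (ρ : M → ℝ)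
    (hρm : Measurable ρ) (hρ : ∀ x, 0 < ρ x ∧ ρ x ≤ 1)
    (n : ℕ) (hn : 3 ≤ n) (p : ℝ) (hp : 2 ≤ p) (hp' : p < 2 * n / ((n : ℝ) - 2))
    (hTmeas : ∀ v ∈ T, Measurable v)
    (hTint : ∀ v ∈ T, Integrable (fun x => |v x| ^ p) μ)
    (hscale : ∀ v ∈ T, ∀ t : ℝ, (fun x => t * v x) ∈ T)
    (hEquad : ∀ v ∈ T, ∀ t : ℝ, E (fun x => t * v x) = t ^ 2 * E v)
    (hE : ∀ v ∈ T, 0 ≤ E v) :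
    Tendsto (fun α => weightedYamabe μ T E ρ p α) (nhdsWithin 0 (Set.Ioi 0))
      (nhds (weightedYamabe μ T E ρ p 0)) := by
  have hp0 : (0:ℝ) < p := lt_of_lt_of_le two_pos hp
  have hρpos : ∀ x, 0 < ρ x := fun x => (hρ x).1
  -- the normalization sets
  set S : ℝ → Set ℝ := fun α =>
    {q : ℝ | ∃ v ∈ T, LpNormR μ p (fun x => ρ x ^ α * v x) = 1 ∧ q = E v} with hSdef
  have hQ : ∀ α, weightedYamabe μ T E ρ p α = sInf (S α) := fun α => rfl
  -- the weighted norm as a function of the weighted integral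
  have hN : ∀ (α : ℝ) (v : M → ℝ), LpNormR μ p (fun x => ρ x ^ α * v x)
      = (∫ x, ρ x ^ (α * p) * |v x| ^ p ∂μ) ^ (1/p) := by
    intro α v
    unfold LpNormR
    rw [aux_abs_rpow ρ hρpos α p v]
  -- the weighted integral at α = 0 is the unweighted one
  have hI0 : ∀ v : M → ℝ, (∫ x, ρ x ^ ((0:ℝ) * p) * |v x| ^ p ∂μ) = ∫ x, |v x| ^ p ∂μ := by
    intro v
    congr 1
    funext x
    rw [zero_mul, Real.rpow_zero, one_mul]
  -- boundedness below of all the sets S α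
  have hbdd : ∀ α, BddBelow (S α) := by
    intro α
    refine ⟨0, fun q hq => ?_⟩
    obtain ⟨v, hv, -, rfl⟩ := hq
    exact hE v hv
  -- if the weighted norm is positive, we can normalize and get an element of S α
  have hmem : ∀ (α : ℝ) (v : M → ℝ), v ∈ T →
      0 < LpNormR μ p (fun x => ρ x ^ α * v x) →
      ((LpNormR μ p (fun x => ρ x ^ α * v x))⁻¹) ^ 2 * E v ∈ S α := by
    intro α v hv hpos
    set c := LpNormR μ p (fun x => ρ x ^ α * v x) with hc
    refine ⟨fun x => c⁻¹ * v x, hscale v hv c⁻¹, ?_, (hEquad v hv c⁻¹).symm⟩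
    have h1 : (fun x => ρ x ^ α * (c⁻¹ * v x)) = fun x => c⁻¹ * (ρ x ^ α * v x) := by
      funext x; ring
    rw [h1, aux_lp_smul μ hp0, abs_of_pos (inv_pos.2 hpos), ← hc, inv_mul_cancel₀ hpos.ne']
  -- positivity of the weighted integral given membership in S α, α ≥ 0
  have hIpos : ∀ (α : ℝ), 0 ≤ α → ∀ v ∈ T, LpNormR μ p (fun x => ρ x ^ α * v x) = 1 →
      0 < ∫ x, |v x| ^ p ∂μ := by
    intro α hα v hv h1
    by_contra hle
    push_neg at hle
    have hint0 : (∫ x, ρ x ^ (α * p) * |v x| ^ p ∂μ) ≤ 0 := by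
      calc (∫ x, ρ x ^ (α * p) * |v x| ^ p ∂μ)
          ≤ ∫ x, |v x| ^ p ∂μ :=
            aux_le μ hρm hρ (hTmeas v hv) (hTint v hv) (mul_nonneg hα hp0.le)
        _ ≤ 0 := hle
    have hge : (0:ℝ) ≤ ∫ x, ρ x ^ (α * p) * |v x| ^ p ∂μ :=
      integral_nonneg fun x =>
        mul_nonneg (Real.rpow_nonneg (hρ x).1.le _) (Real.rpow_nonneg (abs_nonneg _) p)
    have h0 : (∫ x, ρ x ^ (α * p) * |v x| ^ p ∂μ) = 0 := le_antisymm hint0 hge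
    rw [hN α v, h0, Real.zero_rpow (by positivity)] at h1
    exact zero_ne_one h1
  -- positivity of the weighted norm for any α ≥ 0, whenever the unweighted integral is positive
  have hNpos : ∀ (α : ℝ), 0 ≤ α → ∀ v, Measurable v → Integrable (fun x => |v x| ^ p) μ →
      0 < ∫ x, |v x| ^ p ∂μ → 0 < LpNormR μ p (fun x => ρ x ^ α * v x) := by
    intro α hα v hvm hvi hpos
    rw [hN α v]
    exact Real.rpow_pos_of_pos
      (aux_pos μ hρm hρ hvm hvi (mul_nonneg hα hp0.le) hpos) _
  by_cases hne : (S 0).Nonempty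
  · -- main case : S 0 is nonempty
    -- lower bound : Q 0 ≤ q for every q ∈ S α, α ≥ 0
    have hlow : ∀ (α : ℝ), 0 ≤ α → ∀ q ∈ S α, sInf (S 0) ≤ q := by
      intro α hα q hq
      obtain ⟨v, hv, h1, rfl⟩ := hq
      have hvI : 0 < ∫ x, |v x| ^ p ∂μ := hIpos α hα v hv h1
      have hN0pos : 0 < LpNormR μ p (fun x => ρ x ^ (0:ℝ) * v x) :=
        hNpos 0 le_rfl v (hTmeas v hv) (hTint v hv) hvI
      have hmono : LpNormR μ p (fun x => ρ x ^ α * v x)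
          ≤ LpNormR μ p (fun x => ρ x ^ (0:ℝ) * v x) := by
        rw [hN α v, hN 0 v, hI0 v]
        exact Real.rpow_le_rpow
          (integral_nonneg fun x =>
            mul_nonneg (Real.rpow_nonneg (hρ x).1.le _) (Real.rpow_nonneg (abs_nonneg _) p))
          (aux_le μ hρm hρ (hTmeas v hv) (hTint v hv) (mul_nonneg hα hp0.le))
          (by positivity)
      have hge1 : 1 ≤ LpNormR μ p (fun x => ρ x ^ (0:ℝ) * v x) := h1 ▸ hmono
      have hmem0 := hmem 0 v hv hN0pos
      have hle : ((LpNormR μ p (fun x => ρ x ^ (0:ℝ) * v x))⁻¹) ^ 2 * E v ≤ E v := by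
        refine mul_le_of_le_one_left (hE v hv) ?_
        have : (LpNormR μ p (fun x => ρ x ^ (0:ℝ) * v x))⁻¹ ≤ 1 :=
          inv_le_one_of_one_le₀ hge1
        have h0' : 0 ≤ (LpNormR μ p (fun x => ρ x ^ (0:ℝ) * v x))⁻¹ :=
          inv_nonneg.2 hN0pos.le
        nlinarith
      exact le_trans (csInf_le (hbdd 0) hmem0) hle
    -- now prove convergence
    have hgoal : Tendsto (fun α => sInf (S α)) (nhdsWithin 0 (Set.Ioi 0))
        (nhds (sInf (S 0))) := by
      rw [Metric.tendsto_nhds]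
      intro ε hε
      obtain ⟨q, hqS, hqlt⟩ := exists_lt_of_csInf_lt hne
        (by linarith : sInf (S 0) < sInf (S 0) + ε)
      obtain ⟨v, hv, h1, rfl⟩ := hqS
      have hvI : 0 < ∫ x, |v x| ^ p ∂μ := hIpos 0 le_rfl v hv h1
      have htI : Tendsto (fun α : ℝ => ∫ x, ρ x ^ (α * p) * |v x| ^ p ∂μ)
          (nhdsWithin 0 (Set.Ioi 0)) (nhds (∫ x, |v x| ^ p ∂μ)) :=
        aux_tendsto μ hρm hρ hp0 (hTmeas v hv) (hTint v hv)
      have hIv1 : (∫ x, |v x| ^ p ∂μ) ^ (1/p) = 1 := by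
        rw [← hI0 v, ← hN 0 v]; exact h1
      have htN : Tendsto (fun α : ℝ => LpNormR μ p (fun x => ρ x ^ α * v x))
          (nhdsWithin 0 (Set.Ioi 0)) (nhds 1) := by
        have hcont : ContinuousAt (fun y : ℝ => y ^ (1/p)) (∫ x, |v x| ^ p ∂μ) :=
          Real.continuousAt_rpow_const _ _ (Or.inl hvI.ne')
        have h2 := hcont.tendsto.comp htI
        simp only [Function.comp_def] at h2
        rw [hIv1] at h2
        exact h2.congr fun α => (hN α v).symm
      have hg : Tendsto
          (fun α : ℝ => ((LpNormR μ p (fun x => ρ x ^ α * v x))⁻¹) ^ 2 * E v)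
          (nhdsWithin 0 (Set.Ioi 0)) (nhds (E v)) := by
        have h3 := ((htN.inv₀ one_ne_zero).pow 2).mul_const (E v)
        simpa using h3
      have hev1 := hg.eventually_lt_const hqlt
      have hev2 := htN.eventually_const_lt zero_lt_one
      filter_upwards [hev1, hev2, self_mem_nhdsWithin] with α ha1 ha2 hα
      have hQle : sInf (S α) ≤ ((LpNormR μ p (fun x => ρ x ^ α * v x))⁻¹) ^ 2 * E v :=
        csInf_le (hbdd α) (hmem α v hv ha2)
      have hQge : sInf (S 0) ≤ sInf (S α) :=
        le_csInf ⟨_, hmem α v hv ha2⟩ (hlow α (le_of_lt hα))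
      rw [Real.dist_eq, abs_lt]
      constructor <;> linarith [lt_of_le_of_lt hQle ha1]
    exact hgoal
  · -- degenerate case : S 0 is empty, hence every S α is empty
    have hempty : ∀ α : ℝ, 0 ≤ α → S α = ∅ := by
      intro α hα
      rw [Set.eq_empty_iff_forall_notMem]
      rintro q ⟨v, hv, h1, rfl⟩
      have hvI : 0 < ∫ x, |v x| ^ p ∂μ := hIpos α hα v hv h1
      have hN0pos : 0 < LpNormR μ p (fun x => ρ x ^ (0:ℝ) * v x) :=
        hNpos 0 le_rfl v (hTmeas v hv) (hTint v hv) hvI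
      exact hne ⟨_, hmem 0 v hv hN0pos⟩
    have hz : weightedYamabe μ T E ρ p 0 = 0 := by
      rw [hQ 0, Set.not_nonempty_iff_eq_empty.1 hne, Real.sInf_empty]
    rw [hz]
    refine Tendsto.congr' ?_ tendsto_const_nhds
    filter_upwards [self_mem_nhdsWithin] with α hα
    have : S α = ∅ := hempty α (le_of_lt hα)
    rw [hQ α, this, Real.sInf_empty]
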